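/- (Theorem A.3) Let A, H, P be 2p×2p complex matrices whose 2×2 blocks all lie in Σ, such that all eigenvalues of A have positive real part, H commutes with A, and P is invertible. Then for each fixed t ∈ ℝ, the set of x ∈ ℝ for which the matrix e^{2xA}·e^{−tH} + P is singular is finite, and likewise the set of x ∈ ℝ for which e^{−2xA}·e^{−tH} + P is singular is finite. -/

import Mathlib

open Matrix Complex

noncomputable def sigma2 : Matrix (Fin 2) (Fin 2) ℂ := !![0, -Complex.I; Complex.I, 0]

/-- Membership in Σ. -/
def memSigma (S : Matrix (Fin 2) (Fin 2) ℂ) : Prop :=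
  S.map (starRingEnd ℂ) = sigma2 * S * sigma2

section AuxLemmas
open Filter
variable {n : Type*} [Fintype n] [DecidableEq n]

theorem aux_rate (r : ℝ) (hr : 0 < r) (l : ℕ) :
    Tendsto (fun x : ℝ => x ^ l * Real.exp (-(r * x))) atTop (nhds 0) := by
  have h := (Real.tendsto_pow_mul_exp_neg_atTop_nhds_zero l).comp
    (tendsto_id.const_mul_atTop hr)
  have h2 := h.const_mul ((r ^ l)⁻¹)
  rw [mul_zero] at h2
  refine h2.congr fun x => ?_
  simp only [Function.comp, id_eq]
  rw [mul_pow, ← mul_assoc, ← mul_assoc, inv_mul_cancel₀ (by positivity : (r:ℝ)^l ≠ 0), one_mul]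

open Module in
theorem aux_vec_decay (A : Matrix n n ℂ) (hspec : ∀ μ ∈ spectrum ℂ A, 0 < μ.re)
    (v : n → ℂ) :
    Tendsto (fun x : ℝ => NormedSpace.exp ((-x : ℂ) • A) *ᵥ v) atTop (nhds 0) := by
  classical
  let S : Submodule ℂ (n → ℂ) :=
    { carrier := {w | Tendsto (fun x : ℝ => NormedSpace.exp ((-x : ℂ) • A) *ᵥ w) atTop (nhds 0)}
      add_mem' := fun {w} {u} hw hu => by
        simpa [Matrix.mulVec_add] using hw.add hu
      zero_mem' := by simpa [Matrix.mulVec_zero] using (tendsto_const_nhds :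
        Tendsto (fun _ : ℝ => (0 : n → ℂ)) atTop _)
      smul_mem' := fun c w hw => by
        simpa [Matrix.mulVec_smul] using hw.const_smul c }
  suffices hS : ⊤ ≤ S from hS (Submodule.mem_top) 
  set f : Module.End ℂ (n → ℂ) := Matrix.toLinAlgEquiv' A with hf
  rw [← Module.End.iSup_maxGenEigenspace_eq_top f]
  refine iSup_le fun μ => fun w hw => ?_
  rcases eq_or_ne w 0 with rfl | hw0
  · exact S.zero_mem
  -- μ is an eigenvalue, hence in the spectrum of A
  have hμA : μ ∈ spectrum ℂ A := by
    obtain ⟨k, hk⟩ := (Module.End.mem_maxGenEigenspace f μ w).mp hw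
    have hgen : f.HasGenEigenvalue μ k := by
      refine Submodule.ne_bot_iff _ |>.mpr ⟨w, ?_, hw0⟩
      rw [Module.End.mem_genEigenspace_nat]
      exact hk
    have := (Module.End.hasEigenvalue_of_hasGenEigenvalue hgen).mem_spectrum
    rwa [hf, AlgEquiv.spectrum_eq] at this
  have hμre : 0 < μ.re := hspec μ hμA
  obtain ⟨k, hk⟩ := (Module.End.mem_maxGenEigenspace f μ w).mp hw
  set B : Matrix n n ℂ := A - μ • 1 with hB
  have hBk : B ^ k *ᵥ w = 0 := by
    have h1 : Matrix.toLinAlgEquiv' (B ^ k) = (f - μ • 1) ^ k := by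
      rw [map_pow, map_sub, _root_.map_smul, _root_.map_one]
    have h2 : Matrix.toLinAlgEquiv' (B ^ k) w = 0 := by rw [h1]; exact hk
    exact h2
  -- the explicit formula
  have hformula : ∀ x : ℝ, NormedSpace.exp ((-x : ℂ) • A) *ᵥ w =
      ∑ l ∈ Finset.range k,
        (Complex.exp ((-x : ℂ) * μ) * ((Nat.factorial l : ℂ)⁻¹ * (-x : ℂ) ^ l)) • (B ^ l *ᵥ w) := by
    intro x
    letI : SeminormedRing (Matrix n n ℂ) := Matrix.linftyOpSemiNormedRing
    letI : NormedRing (Matrix n n ℂ) := Matrix.linftyOpNormedRing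
    letI : NormedAlgebra ℂ (Matrix n n ℂ) := Matrix.linftyOpNormedAlgebra
    have hsplit : (-x : ℂ) • A = ((-x : ℂ) * μ) • (1 : Matrix n n ℂ) + (-x : ℂ) • B := by
      rw [hB, smul_sub, smul_smul, add_sub_cancel]
    have hcomm : Commute (((-x : ℂ) * μ) • (1 : Matrix n n ℂ)) ((-x : ℂ) • B) :=
      ((Commute.one_left B).smul_left _).smul_right _
    have h1 : NormedSpace.exp (((-x : ℂ) * μ) • (1 : Matrix n n ℂ))
        = Complex.exp ((-x : ℂ) * μ) • (1 : Matrix n n ℂ) := by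
      have h := NormedSpace.algebraMap_exp_comm (𝔸 := Matrix n n ℂ) ((-x : ℂ) * μ)
      rw [Complex.exp_eq_exp_ℂ]
      rw [Algebra.smul_def ((-x : ℂ) * μ), mul_one,
        Algebra.smul_def (NormedSpace.exp ((-x : ℂ) * μ)), mul_one]
      exact h.symm
    -- HasSum for exp ((-x) • B) *ᵥ w
    let Lv : Matrix n n ℂ →ₗ[ℂ] (n → ℂ) :=
      { toFun := fun M => M *ᵥ w
        map_add' := fun M N => Matrix.add_mulVec M N w
        map_smul' := fun c M => Matrix.smul_mulVec c M w }
    have hs := NormedSpace.exp_series_hasSum_exp' (𝕂 := ℂ) ((-x : ℂ) • B)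
    have hsum : HasSum (fun l : ℕ => (Nat.factorial l : ℂ)⁻¹ • (((-x : ℂ) • B) ^ l *ᵥ w))
        (NormedSpace.exp ((-x : ℂ) • B) *ᵥ w) := by
      have := hs.mapL Lv.toContinuousLinearMap
      simp only [Lv, LinearMap.coe_toContinuousLinearMap', LinearMap.coe_mk, AddHom.coe_mk,
        Matrix.smul_mulVec] at this
      exact this
    have hzero : ∀ l : ℕ, l ∉ Finset.range k →
        (Nat.factorial l : ℂ)⁻¹ • (((-x : ℂ) • B) ^ l *ᵥ w) = 0 := by
      intro l hl
      rw [Finset.mem_range, not_lt] at hl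
      obtain ⟨d, rfl⟩ := Nat.exists_eq_add_of_le hl
      rw [smul_pow, Matrix.smul_mulVec, add_comm k d, pow_add B d k,
        ← Matrix.mulVec_mulVec, hBk, Matrix.mulVec_zero, smul_zero, smul_zero]
    have hfin := hasSum_sum_of_ne_finset_zero (L := SummationFilter.unconditional ℕ) hzero
    have heq := hsum.unique hfin
    rw [hsplit, Matrix.exp_add_of_commute _ _ hcomm, h1, smul_mul_assoc, one_mul,
      Matrix.smul_mulVec, heq, Finset.smul_sum]
    refine Finset.sum_congr rfl fun l _ => ?_
    simp only [smul_pow, Matrix.smul_mulVec, smul_smul, mul_assoc]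
  -- tendsto
  show Tendsto _ atTop (nhds 0)
  simp only [hformula]
  have : Tendsto (fun x : ℝ => ∑ l ∈ Finset.range k,
      (Complex.exp ((-x : ℂ) * μ) * ((Nat.factorial l : ℂ)⁻¹ * (-x : ℂ) ^ l)) • (B ^ l *ᵥ w)) atTop
      (nhds (∑ l ∈ Finset.range k, (0 : n → ℂ))) := by
    refine tendsto_finset_sum _ fun l _ => ?_
    have hc : Tendsto (fun x : ℝ =>
        Complex.exp ((-x : ℂ) * μ) * ((Nat.factorial l : ℂ)⁻¹ * (-x : ℂ) ^ l)) atTop (nhds 0) := by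
      have hb := (aux_rate μ.re hμre l).const_mul ((Nat.factorial l : ℝ)⁻¹)
      rw [mul_zero] at hb
      refine squeeze_zero_norm' ?_ hb
      filter_upwards [eventually_ge_atTop (0 : ℝ)] with x hx
      have h1 : ((-x : ℂ) * μ).re = -(μ.re * x) := by
        simp [Complex.mul_re]; ring
      have h2 : ‖(-x : ℂ)‖ = x := by
        rw [norm_neg, Complex.norm_real]; exact abs_of_nonneg hx
      have h3 : ‖(Nat.factorial l : ℂ)⁻¹‖ = (Nat.factorial l : ℝ)⁻¹ := by
        rw [norm_inv]; norm_num
      rw [norm_mul, norm_mul, norm_pow, Complex.norm_exp, h1, h2, h3]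
      exact le_of_eq (by ring)
    have := hc.smul_const (B ^ l *ᵥ w)
    simpa using this
  simpa using this

theorem aux_decay (A : Matrix n n ℂ) (hspec : ∀ μ ∈ spectrum ℂ A, 0 < μ.re) :
    Tendsto (fun x : ℝ => NormedSpace.exp ((-x : ℂ) • A)) atTop (nhds 0) := by
  classical
  refine tendsto_pi_nhds.mpr fun i => ?_
  refine tendsto_pi_nhds.mpr fun j => ?_
  have h := aux_vec_decay A hspec (Pi.single j 1)
  rw [tendsto_pi_nhds] at h
  simpa [Matrix.mulVec_single] using h i

theorem aux_exp_entry_diff' (A : Matrix n n ℂ) (i j : n) :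
    Differentiable ℂ fun z : ℂ => NormedSpace.exp (z • A) i j := by
  letI : SeminormedRing (Matrix n n ℂ) := Matrix.linftyOpSemiNormedRing
  letI : NormedRing (Matrix n n ℂ) := Matrix.linftyOpNormedRing
  letI : NormedAlgebra ℂ (Matrix n n ℂ) := Matrix.linftyOpNormedAlgebra
  have h1 : Differentiable ℂ fun z : ℂ => NormedSpace.exp (z • A) :=
    fun z => (hasDerivAt_exp_smul_const A z).differentiableAt
  let L : Matrix n n ℂ →ₗ[ℂ] ℂ :=
    (LinearMap.proj j).comp (LinearMap.proj (R := ℂ) (φ := fun _ : n => n → ℂ) i)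
  exact fun z => (L.toContinuousLinearMap.differentiable.comp h1 z)

theorem aux_det_diff (A E P : Matrix n n ℂ) :
    Differentiable ℂ fun z : ℂ => ((NormedSpace.exp (z • A)) * E + P).det := by
  classical
  have hentry : ∀ i j : n, Differentiable ℂ fun z : ℂ =>
      ((NormedSpace.exp (z • A)) * E + P) i j := by
    intro i j
    have h2 : (fun z : ℂ => ((NormedSpace.exp (z • A)) * E + P) i j)
        = fun z => (∑ l, NormedSpace.exp (z • A) i l * E l j) + P i j := by
      funext z; simp [Matrix.mul_apply, Matrix.add_apply]
    rw [h2]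
    exact (Differentiable.fun_sum fun l _ =>
      (aux_exp_entry_diff' A i l).mul_const _).add_const _
  have h3 : (fun z : ℂ => ((NormedSpace.exp (z • A)) * E + P).det)
      = fun z => ∑ σ : Equiv.Perm n, ((Equiv.Perm.sign σ : ℤ) : ℂ) *
          ∏ i, ((NormedSpace.exp (z • A)) * E + P) (σ i) i := by
    funext z; rw [Matrix.det_apply']
  rw [h3]
  exact Differentiable.fun_sum fun σ _ =>
    (Differentiable.fun_finset_prod fun i _ => hentry (σ i) i).const_mul _

theorem aux_zeros_finite {g : ℂ → ℂ} (hg : Differentiable ℂ g) {a b : ℝ}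
    (h1 : ∀ x : ℝ, x ≤ a → g x ≠ 0) (h2 : ∀ x : ℝ, b ≤ x → g x ≠ 0) :
    {x : ℝ | g x = 0}.Finite := by
  by_contra hinf
  replace hinf : {x : ℝ | g x = 0}.Infinite := hinf
  have hsub : {x : ℝ | g x = 0} ⊆ Set.Icc a b := by
    intro x hx
    refine ⟨?_, ?_⟩
    · by_contra hxa; push_neg at hxa; exact h1 x hxa.le hx
    · by_contra hxb; push_neg at hxb; exact h2 x hxb.le hx
  have himg : ((fun x : ℝ => (x : ℂ)) '' {x : ℝ | g x = 0}).Infinite :=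
    hinf.image (Complex.ofReal_injective.injOn)
  have hK : IsCompact ((fun x : ℝ => (x : ℂ)) '' Set.Icc a b) :=
    isCompact_Icc.image Complex.continuous_ofReal
  obtain ⟨z₀, _, hacc⟩ := himg.exists_accPt_of_subset_isCompact hK
    (Set.image_mono hsub)
  have hfreq : ∃ᶠ z in nhdsWithin z₀ {z₀}ᶜ, g z = 0 := by
    rw [accPt_iff_frequently] at hacc
    rw [frequently_nhdsWithin_iff]
    refine hacc.mono fun y hy => ⟨?_, ?_⟩
    · obtain ⟨x, hx, rfl⟩ := hy.2
      exact hx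
    · exact hy.1
  have hanal : AnalyticOnNhd ℂ g Set.univ := Complex.analyticOnNhd_univ_iff_differentiable.mpr hg
  have hzero := hanal.eqOn_zero_of_preconnected_of_frequently_eq_zero
    isPreconnected_univ (Set.mem_univ z₀) hfreq
  exact h1 a le_rfl (hzero (Set.mem_univ ((a : ℝ) : ℂ)))

end AuxLemmas

open Filter in
/-- Theorem A.3: with A, H, P ∈ Σ^{p×p}, all eigenvalues of A of
positive real part, AH = HA and P invertible, for each fixed t ∈ ℝ the matrix
e^{±2xA} e^{−tH} + P is singular for at most finitely many x ∈ ℝ. -/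
theorem finitely_many_singular_points (p : ℕ)
    (A H P : Matrix (Fin p × Fin 2) (Fin p × Fin 2) ℂ)
    (hAblocks : ∀ j k : Fin p, memSigma (fun a b => A (j, a) (k, b)))
    (hHblocks : ∀ j k : Fin p, memSigma (fun a b => H (j, a) (k, b)))
    (hPblocks : ∀ j k : Fin p, memSigma (fun a b => P (j, a) (k, b)))
    (hspec : ∀ μ ∈ spectrum ℂ A, 0 < μ.re)
    (hcomm : A * H = H * A)
    (hP : IsUnit P) (t : ℝ) :
    {x : ℝ | ¬ IsUnit (NormedSpace.exp ((2 * x) • A) *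
        NormedSpace.exp ((-t) • H) + P)}.Finite ∧
    {x : ℝ | ¬ IsUnit (NormedSpace.exp ((-(2 * x)) • A) *
        NormedSpace.exp ((-t) • H) + P)}.Finite := by
  classical
  set E : Matrix (Fin p × Fin 2) (Fin p × Fin 2) ℂ := NormedSpace.exp ((-t) • H) with hE
  have hEunit : IsUnit E := Matrix.isUnit_exp _
  have hEdet : E.det ≠ 0 := by
    intro h
    exact (by simpa [isUnit_iff_ne_zero, h] using (Matrix.isUnit_iff_isUnit_det E).mp hEunit)
  have hPdet : P.det ≠ 0 := by
    intro h
    exact (by simpa [isUnit_iff_ne_zero, h] using (Matrix.isUnit_iff_isUnit_det P).mp hP)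
  set g : ℂ → ℂ := fun z => ((NormedSpace.exp (z • A)) * E + P).det with hg
  have hdiff : Differentiable ℂ g := aux_det_diff A E P
  -- eventually nonzero at -∞
  have hbot : ∀ᶠ x : ℝ in atBot, g x ≠ 0 := by
    have hd : Tendsto (fun x : ℝ => NormedSpace.exp (((x : ℝ) : ℂ) • A)) atBot (nhds 0) := by
      have h := (aux_decay A hspec).comp tendsto_neg_atBot_atTop
      refine h.congr fun x => ?_
      simp only [Function.comp]
      norm_num
    have hmul : Tendsto (fun x : ℝ => (NormedSpace.exp (((x : ℝ) : ℂ) • A)) * E + P)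
        atBot (nhds ((0 : Matrix (Fin p × Fin 2) (Fin p × Fin 2) ℂ) * E + P)) :=
      (hd.mul tendsto_const_nhds).add tendsto_const_nhds
    have hdet : Tendsto (fun x : ℝ => g x) atBot (nhds (((0 : Matrix _ _ ℂ) * E + P).det)) :=
      ((continuous_id.matrix_det).tendsto _).comp hmul
    refine hdet.eventually_ne ?_
    simpa using hPdet
  -- eventually nonzero at +∞
  have htop : ∀ᶠ x : ℝ in atTop, g x ≠ 0 := by
    have hd := aux_decay A hspec
    have hmul : Tendsto (fun x : ℝ => E + (NormedSpace.exp ((-x : ℂ) • A)) * P)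
        atTop (nhds (E + (0 : Matrix _ _ ℂ) * P)) :=
      tendsto_const_nhds.add (hd.mul tendsto_const_nhds)
    have hdet2 : Tendsto (fun x : ℝ => (E + (NormedSpace.exp ((-x : ℂ) • A)) * P).det)
        atTop (nhds ((E + (0 : Matrix _ _ ℂ) * P).det)) :=
      ((continuous_id.matrix_det).tendsto _).comp hmul
    have hne := hdet2.eventually_ne (by simpa using hEdet)
    filter_upwards [hne] with x hx
    have hinv : NormedSpace.exp (((x : ℝ) : ℂ) • A) * NormedSpace.exp ((-x : ℂ) • A) = 1 := by
      rw [← Matrix.exp_add_of_commute]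
      · norm_num
      · exact ((Commute.refl A).smul_left _).smul_right _
    have hfact : g x = (NormedSpace.exp (((x : ℝ) : ℂ) • A)).det *
        (E + (NormedSpace.exp ((-x : ℂ) • A)) * P).det := by
      rw [hg, ← Matrix.det_mul]
      congr 1
      rw [mul_add, ← mul_assoc, hinv, one_mul]
    rw [hfact]
    refine mul_ne_zero ?_ hx
    have hu : IsUnit (NormedSpace.exp (((x : ℝ) : ℂ) • A)).det :=
      (Matrix.isUnit_iff_isUnit_det _).mp (Matrix.isUnit_exp _)
    exact isUnit_iff_ne_zero.mp hu
  obtain ⟨a, ha⟩ := eventually_atBot.mp hbot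
  obtain ⟨b, hb⟩ := eventually_atTop.mp htop
  have hfin : {y : ℝ | g y = 0}.Finite := aux_zeros_finite hdiff ha hb
  -- identify the two sets as preimages
  have hchar : ∀ (c : ℝ),
      ¬ IsUnit (NormedSpace.exp (c • A) * E + P) ↔ g c = 0 := by
    intro c
    have hsc : (c • A : Matrix (Fin p × Fin 2) (Fin p × Fin 2) ℂ) = ((c : ℂ)) • A := by
      rw [← algebraMap_smul ℂ c A]
      norm_num
    rw [hg]
    simp only [hsc]
    rw [Matrix.isUnit_iff_isUnit_det, isUnit_iff_ne_zero, not_not]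
  constructor
  · have hset : {x : ℝ | ¬ IsUnit (NormedSpace.exp ((2 * x) • A) * E + P)}
        = (fun x : ℝ => 2 * x) ⁻¹' {y : ℝ | g y = 0} := by
      ext x
      simp only [Set.mem_setOf_eq, Set.mem_preimage]
      exact hchar (2 * x)
    rw [hset]
    exact hfin.preimage ((mul_right_injective₀ (two_ne_zero)).injOn)
  · have hset : {x : ℝ | ¬ IsUnit (NormedSpace.exp ((-(2 * x)) • A) * E + P)}
        = (fun x : ℝ => -(2 * x)) ⁻¹' {y : ℝ | g y = 0} := by
      ext x
      simp only [Set.mem_setOf_eq, Set.mem_preimage]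
      exact hchar (-(2 * x))
    rw [hset]
    exact hfin.preimage ((neg_injective.comp (mul_right_injective₀ (two_ne_zero))).injOn)
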